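/- Fix n ∈ ℕ and a smooth cutoff function β : ℝ → [0,1] with β ≡ 1 on (−∞,−1] and β ≡ 0 on [1,∞). For R ∈ ℝ define, for bounded continuous u, v : ℝ → ℝⁿ, the pregluing ⊕_R(u,v) := β·u(·+R/2) + (1−β)·v(·−R/2) and the antigluing ⊖_R(u,v) := (β−1)·u(·+R/2) + β·v(·−R/2). Then for every R ∈ ℝ the combined map ⊞_R := (⊕_R, ⊖_R) : BC(ℝ,ℝⁿ) × BC(ℝ,ℝⁿ) → BC(ℝ,ℝⁿ) × BC(ℝ,ℝⁿ) is a bounded linear bijection with bounded inverse (a Banach space isomorphism); indeed the pointwise coefficient matrix (β, 1−β; β−1, β) has determinant β² + (1−β)² ≥ 1/2 at every point of ℝ. In particular ker ⊖_R and ker ⊕_R are closed subspaces with BC(ℝ,ℝⁿ)² = ker ⊕_R ⊕ ker ⊖_R, i.e. ker ⊖_R is a closed complement of ker ⊕_R. -/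

import Mathlib

/-!
Statement 18: for every gluing parameter `R`, the combined pregluing/antigluing map
`⊞_R = (⊕_R, ⊖_R)` is a Banach space isomorphism of `BC(ℝ,ℝⁿ) × BC(ℝ,ℝⁿ)`; in
particular `ker ⊖_R` is a closed complement of `ker ⊕_R`.
-/

open BoundedContinuousFunction

/-- Bounded continuous functions `ℝ → ℝⁿ` with the sup norm. -/
abbrev BCn (n : ℕ) := BoundedContinuousFunction ℝ (EuclideanSpace ℝ (Fin n))

/-- The kernel of the pregluing map `⊕_R`. -/
def kerPlus (n : ℕ) (β : ℝ → ℝ) (R : ℝ) : Set (BCn n × BCn n) :=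
  {p | ∀ t : ℝ, β t • p.1 (t + R / 2) + (1 - β t) • p.2 (t - R / 2) = 0}

/-- The kernel of the antigluing map `⊖_R`. -/
def kerMinus (n : ℕ) (β : ℝ → ℝ) (R : ℝ) : Set (BCn n × BCn n) :=
  {p | ∀ t : ℝ, (β t - 1) • p.1 (t + R / 2) + β t • p.2 (t - R / 2) = 0}

noncomputable def shiftCLM (n : ℕ) (c : ℝ) : BCn n →L[ℝ] BCn n :=
  LinearMap.mkContinuous
    { toFun := fun u => u.compContinuous ⟨fun t => t + c, by continuity⟩
      map_add' := fun u v => rfl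
      map_smul' := fun r u => rfl }
    1 (fun u => by rw [one_mul]; exact norm_compContinuous_le u ⟨fun t => t + c, by continuity⟩)

@[simp] lemma shiftCLM_apply (n : ℕ) (c : ℝ) (u : BCn n) (t : ℝ) :
    shiftCLM n c u t = u (t + c) := rfl

noncomputable def mulCLM (n : ℕ) (φ : ℝ →ᵇ ℝ) : BCn n →L[ℝ] BCn n :=
  LinearMap.mkContinuous
    { toFun := fun u => BoundedContinuousFunction.ofNormedAddCommGroup
        (fun t => φ t • u t) (φ.continuous.smul u.continuous) (‖φ‖ * ‖u‖)
        (fun t => by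
          rw [norm_smul]
          exact mul_le_mul (φ.norm_coe_le_norm t) (u.norm_coe_le_norm t) (norm_nonneg _)
            (norm_nonneg _))
      map_add' := fun u v => by ext t; simp
      map_smul' := fun r u => by ext t; simp; ring }
    ‖φ‖ (fun u => by
      apply BoundedContinuousFunction.norm_ofNormedAddCommGroup_le
      · positivity
      · intro t
        rw [norm_smul]
        exact mul_le_mul (φ.norm_coe_le_norm t) (u.norm_coe_le_norm t) (norm_nonneg _)
          (norm_nonneg _))

@[simp] lemma mulCLM_apply (n : ℕ) (φ : ℝ →ᵇ ℝ) (u : BCn n) (t : ℝ) :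
    mulCLM n φ u t = φ t • u t := rfl

set_option maxHeartbeats 1000000 in
set_option synthInstance.maxHeartbeats 1000000 in
/-- **Statement 18**: let `β : ℝ → [0,1]` be a smooth cutoff with `β ≡ 1` on `(-∞,-1]`
and `β ≡ 0` on `[1,∞)`.  Then the pointwise coefficient matrix has determinant
`β² + (1-β)² ≥ 1/2` everywhere and, for every `R ∈ ℝ`, the combined
pregluing/antigluing map `⊞_R = (⊕_R, ⊖_R)` is a continuous linear equivalence of
`BC(ℝ,ℝⁿ) × BC(ℝ,ℝⁿ)`; in particular the two kernels are closed subspaces with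
`ker ⊕_R ∩ ker ⊖_R = {0}` and `ker ⊕_R + ker ⊖_R` everything, i.e. `ker ⊖_R` is a
closed complement of `ker ⊕_R`. -/
theorem stmt18 (n : ℕ) (β : ℝ → ℝ)
    (hβsmooth : ContDiff ℝ (⊤ : ℕ∞) β)
    (hβrange : ∀ t, β t ∈ Set.Icc (0 : ℝ) 1)
    (hβone : ∀ t : ℝ, t ≤ -1 → β t = 1)
    (hβzero : ∀ t : ℝ, 1 ≤ t → β t = 0) :
    (∀ t : ℝ, (1 : ℝ) / 2 ≤ β t ^ 2 + (1 - β t) ^ 2) ∧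
    ∀ R : ℝ, ∃ Φ : (BCn n × BCn n) ≃L[ℝ] (BCn n × BCn n),
      (∀ (u v : BCn n) (t : ℝ),
        (Φ (u, v)).1 t = β t • u (t + R / 2) + (1 - β t) • v (t - R / 2)) ∧
      (∀ (u v : BCn n) (t : ℝ),
        (Φ (u, v)).2 t = (β t - 1) • u (t + R / 2) + β t • v (t - R / 2)) ∧
      IsClosed (kerPlus n β R) ∧
      IsClosed (kerMinus n β R) ∧
      kerPlus n β R ∩ kerMinus n β R = {0} ∧
      (∀ w : BCn n × BCn n, ∃ a ∈ kerPlus n β R, ∃ b ∈ kerMinus n β R, w = a + b) := by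
  have hd : ∀ t : ℝ, (1 : ℝ) / 2 ≤ β t ^ 2 + (1 - β t) ^ 2 := fun t => by
    nlinarith [sq_nonneg (β t - 1/2)]
  refine ⟨hd, fun R => ?_⟩
  set h : ℝ := R / 2 with hh
  have hdpos : ∀ t : ℝ, (0 : ℝ) < β t ^ 2 + (1 - β t) ^ 2 := fun t => lt_of_lt_of_le (by norm_num) (hd t)
  have hdne : ∀ t : ℝ, β t ^ 2 + (1 - β t) ^ 2 ≠ 0 := fun t => (hdpos t).ne'
  -- bounded continuous versions
  set βb : ℝ →ᵇ ℝ := BoundedContinuousFunction.ofNormedAddCommGroup β hβsmooth.continuous 1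
    (fun t => by
      have := hβrange t
      rw [Real.norm_eq_abs, abs_le]
      constructor <;> linarith [this.1, this.2]) with hβb
  have hβbapp : ∀ t, βb t = β t := fun t => rfl
  have hcont : Continuous fun t => (β t ^ 2 + (1 - β t) ^ 2)⁻¹ :=
    Continuous.inv₀ ((hβsmooth.continuous.pow 2).add
      ((continuous_const.sub hβsmooth.continuous).pow 2)) hdne
  set cb : ℝ →ᵇ ℝ := BoundedContinuousFunction.ofNormedAddCommGroup
    (fun t => (β t ^ 2 + (1 - β t) ^ 2)⁻¹) hcont 2
    (fun t => by
      rw [Real.norm_eq_abs, abs_of_nonneg (le_of_lt (inv_pos.mpr (hdpos t)))]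
      rw [inv_eq_one_div]
      rw [div_le_iff₀ (hdpos t)]
      linarith [hd t]) with hcb
  have hcbapp : ∀ t, cb t = (β t ^ 2 + (1 - β t) ^ 2)⁻¹ := fun t => rfl
  -- forward and inverse maps
  set F : (BCn n × BCn n) →L[ℝ] (BCn n × BCn n) :=
    ((mulCLM n βb ∘L shiftCLM n h ∘L ContinuousLinearMap.fst ℝ (BCn n) (BCn n)) +
      (mulCLM n (1 - βb) ∘L shiftCLM n (-h) ∘L ContinuousLinearMap.snd ℝ (BCn n) (BCn n))).prod
    ((mulCLM n (βb - 1) ∘L shiftCLM n h ∘L ContinuousLinearMap.fst ℝ (BCn n) (BCn n)) +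
      (mulCLM n βb ∘L shiftCLM n (-h) ∘L ContinuousLinearMap.snd ℝ (BCn n) (BCn n))) with hF
  set G : (BCn n × BCn n) →L[ℝ] (BCn n × BCn n) :=
    (shiftCLM n (-h) ∘L ((mulCLM n (cb * βb) ∘L ContinuousLinearMap.fst ℝ (BCn n) (BCn n)) -
      (mulCLM n (cb * (1 - βb)) ∘L ContinuousLinearMap.snd ℝ (BCn n) (BCn n)))).prod
    (shiftCLM n h ∘L ((mulCLM n (cb * (1 - βb)) ∘L ContinuousLinearMap.fst ℝ (BCn n) (BCn n)) +
      (mulCLM n (cb * βb) ∘L ContinuousLinearMap.snd ℝ (BCn n) (BCn n)))) with hG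
  have hF1 : ∀ (u v : BCn n) (t : ℝ),
      (F (u, v)).1 t = β t • u (t + h) + (1 - β t) • v (t - h) := by
    intro u v t
    simp [hF, sub_eq_add_neg, hβbapp]
  have hF2 : ∀ (u v : BCn n) (t : ℝ),
      (F (u, v)).2 t = (β t - 1) • u (t + h) + β t • v (t - h) := by
    intro u v t
    simp [hF, sub_eq_add_neg, hβbapp]
  have hG1 : ∀ (p : BCn n × BCn n) (s : ℝ),
      (G p).1 s = (cb (s + -h) * βb (s + -h)) • p.1 (s + -h)
        - (cb (s + -h) * (1 - βb (s + -h))) • p.2 (s + -h) := by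
    intro p s
    simp [hG, sub_smul, smul_sub]
  have hG2 : ∀ (p : BCn n × BCn n) (s : ℝ),
      (G p).2 s = (cb (s + h) * (1 - βb (s + h))) • p.1 (s + h)
        + (cb (s + h) * βb (s + h)) • p.2 (s + h) := by
    intro p s
    simp [hG]
  have hGF : Function.LeftInverse G F := by
    intro p
    obtain ⟨u, v⟩ := p
    refine Prod.ext ?_ ?_
    · apply BoundedContinuousFunction.ext; intro s
      rw [hG1, hF1, hF2]
      rw [show s + -h + h = s from by ring, hβbapp, hcbapp]
      match_scalars <;> (field_simp [hdne (s + -h), hdne (s + h), hdne s]; try ring)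
    · apply BoundedContinuousFunction.ext; intro s
      rw [hG2, hF1, hF2]
      rw [show s + h - h = s from by ring, hβbapp, hcbapp]
      match_scalars <;> (field_simp [hdne (s + -h), hdne (s + h), hdne s]; try ring)
  have hFG : Function.RightInverse G F := by
    intro p
    obtain ⟨f, g⟩ := p
    refine Prod.ext ?_ ?_
    · apply BoundedContinuousFunction.ext; intro s
      rw [hF1, hG1, hG2]
      rw [show s + h + -h = s from by ring, show s - h + h = s from by ring, hβbapp, hcbapp]
      match_scalars <;> (field_simp [hdne (s + -h), hdne (s + h), hdne s]; try ring)
    · apply BoundedContinuousFunction.ext; intro s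
      rw [hF2, hG1, hG2]
      rw [show s + h + -h = s from by ring, show s - h + h = s from by ring, hβbapp, hcbapp]
      match_scalars <;> (field_simp [hdne (s + -h), hdne (s + h), hdne s]; try ring)
  set Φ : (BCn n × BCn n) ≃L[ℝ] (BCn n × BCn n) :=
    ContinuousLinearEquiv.equivOfInverse F G hGF hFG with hΦ
  have hΦapp : ∀ p, Φ p = F p := fun p => rfl
  have hker1 : kerPlus n β R = (fun p : BCn n × BCn n => (F p).1) ⁻¹' {0} := by
    ext p
    obtain ⟨u, v⟩ := p
    simp only [kerPlus, Set.mem_setOf_eq, Set.mem_preimage, Set.mem_singleton_iff]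
    constructor
    · intro hp
      apply BoundedContinuousFunction.ext; intro t
      rw [hF1]
      simpa using hp t
    · intro hp t
      have h3 : (F (u, v)).1 t = 0 := by rw [hp]; rfl
      rw [hF1] at h3
      simpa using h3
  have hker2 : kerMinus n β R = (fun p : BCn n × BCn n => (F p).2) ⁻¹' {0} := by
    ext p
    obtain ⟨u, v⟩ := p
    simp only [kerMinus, Set.mem_setOf_eq, Set.mem_preimage, Set.mem_singleton_iff]
    constructor
    · intro hp
      apply BoundedContinuousFunction.ext; intro t
      rw [hF2]
      simpa using hp t
    · intro hp t
      have h3 : (F (u, v)).2 t = 0 := by rw [hp]; rfl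
      rw [hF2] at h3
      simpa using h3
  refine ⟨Φ, fun u v t => by rw [hΦapp, hF1], fun u v t => by rw [hΦapp, hF2], ?_, ?_, ?_, ?_⟩
  · rw [hker1]
    exact IsClosed.preimage (continuous_fst.comp F.continuous) isClosed_singleton
  · rw [hker2]
    exact IsClosed.preimage (continuous_snd.comp F.continuous) isClosed_singleton
  · ext p
    simp only [Set.mem_inter_iff, hker1, hker2, Set.mem_preimage, Set.mem_singleton_iff]
    constructor
    · rintro ⟨h1, h2⟩
      have : F p = 0 := Prod.ext h1 h2
      have : Φ p = 0 := by rw [hΦapp]; exact this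
      have := congrArg Φ.symm this
      simpa using this
    · rintro rfl
      simp
  · intro w
    refine ⟨G (0, (F w).2), ?_, G ((F w).1, 0), ?_, ?_⟩
    · rw [hker1]
      have : F (G (0, (F w).2)) = (0, (F w).2) := hFG _
      simp [Set.mem_preimage, this]
    · rw [hker2]
      have : F (G ((F w).1, 0)) = ((F w).1, 0) := hFG _
      simp [Set.mem_preimage, this]
    · have : G (0, (F w).2) + G ((F w).1, 0) = G ((F w).1, (F w).2) := by
        rw [← map_add]
        congr 1
        simp
      rw [this]
      have : ((F w).1, (F w).2) = F w := rfl
      rw [this]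
      exact (hGF w).symm
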